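/- (Change of variables formula.) Assume p₁,…,pₙ ∈ D_Δ satisfy the Bethe equations exp(iNp_j) = (−1)^{n−1} exp(−i Σ_{k=1}^n Θ(p_j,p_k)) for every j. Fix integers 1 ≤ x₁ < … < xₙ ≤ N and set x₀ = xₙ − N. Then for any function f : S_n → ℝ, Σ_{σ∈S_n} A_σ f(σ) Π_{k=1}^n z_{σ(k)}^{x_k} = Σ_{σ∈S_n} A_σ f(σ∘τ) Π_{k=1}^n z_{σ(k)}^{x_{k−1}}, where τ is the cyclic permutation τ(i) = i+1 for i < n, τ(n) = 1, and z_j = e^{ip_j}. -/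

import Mathlib

open scoped BigOperators
open Complex

noncomputable section

/-- `S(x,y) = e^{-ix} + e^{iy} - 2*Delta`. -/
def Sfun (Δ x y : ℝ) : ℂ :=
  Complex.exp (-(Complex.I * (x : ℂ))) + Complex.exp (Complex.I * (y : ℂ)) - 2 * (Δ : ℂ)

/-- `μ`, the unique solution of `cos μ = -Δ` in `[0, π)` when `Δ ∈ [-1, 1)`, and `0` when `Δ < -1`. -/
def muD (Δ : ℝ) : ℝ := if -1 ≤ Δ then Real.arccos (-Δ) else 0

/-- `D_Δ = (-π + μ, π - μ)`. -/
def Ddom (Δ : ℝ) : Set ℝ := Set.Ioo (-Real.pi + muD Δ) (Real.pi - muD Δ)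

/-- `L(z) = 1 + c²z/(1-z)`. -/
def Lfun (c : ℝ) (z : ℂ) : ℂ := 1 + (c : ℂ) ^ 2 * z / (1 - z)

/-- `M(z) = 1 - c²/(1-z)`. -/
def Mfun (c : ℝ) (z : ℂ) : ℂ := 1 - (c : ℂ) ^ 2 / (1 - z)

/-- `z_j = e^{i p_j}`. -/
def zOf {n : ℕ} (p : Fin n → ℝ) : Fin n → ℂ := fun j => Complex.exp (Complex.I * (p j : ℂ))

/-- The coefficient `A_σ`. -/
def Acoef {n : ℕ} (Δ : ℝ) (p : Fin n → ℝ) (σ : Equiv.Perm (Fin n)) : ℂ :=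
  ((Equiv.Perm.sign σ : ℤ) : ℂ) *
    ∏ kl ∈ Finset.univ.filter (fun kl : Fin n × Fin n => kl.1 < kl.2),
      Complex.exp (Complex.I * (p (σ kl.1) : ℂ)) * Sfun Δ (p (σ kl.1)) (p (σ kl.2))

section Helpers

variable {Δ : ℝ} {Θ : ℝ → ℝ → ℝ}

lemma Sfun_ne_zero_of
    (hΘ : ∀ a ∈ Ddom Δ, ∀ b ∈ Ddom Δ,
      Complex.exp (-(Complex.I * (Θ a b : ℂ))) =
        Complex.exp (Complex.I * ((a : ℂ) - (b : ℂ))) * Sfun Δ a b / Sfun Δ b a)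
    {a b : ℝ} (ha : a ∈ Ddom Δ) (hb : b ∈ Ddom Δ) : Sfun Δ b a ≠ 0 := by
  intro h
  have h2 := hΘ a ha b hb
  rw [h, div_zero] at h2
  exact Complex.exp_ne_zero _ h2

lemma exp_theta_diag
    (hΘ : ∀ a ∈ Ddom Δ, ∀ b ∈ Ddom Δ,
      Complex.exp (-(Complex.I * (Θ a b : ℂ))) =
        Complex.exp (Complex.I * ((a : ℂ) - (b : ℂ))) * Sfun Δ a b / Sfun Δ b a)
    {a : ℝ} (ha : a ∈ Ddom Δ) : Complex.exp (-(Complex.I * (Θ a a : ℂ))) = 1 := by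
  have hS := Sfun_ne_zero_of hΘ ha ha
  have h2 := hΘ a ha a ha
  rw [sub_self, mul_zero, Complex.exp_zero, one_mul, div_self hS] at h2
  exact h2

lemma exchange
    (hΘ : ∀ a ∈ Ddom Δ, ∀ b ∈ Ddom Δ,
      Complex.exp (-(Complex.I * (Θ a b : ℂ))) =
        Complex.exp (Complex.I * ((a : ℂ) - (b : ℂ))) * Sfun Δ a b / Sfun Δ b a)
    {a b : ℝ} (ha : a ∈ Ddom Δ) (hb : b ∈ Ddom Δ) :
    Complex.exp (Complex.I * (a : ℂ)) * Sfun Δ a b =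
      Complex.exp (-(Complex.I * (Θ a b : ℂ))) *
        (Complex.exp (Complex.I * (b : ℂ)) * Sfun Δ b a) := by
  have hS := Sfun_ne_zero_of hΘ ha hb
  rw [hΘ a ha b hb]
  have key : Complex.exp (Complex.I * ((a : ℂ) - b)) * Complex.exp (Complex.I * (b : ℂ)) =
      Complex.exp (Complex.I * (a : ℂ)) := by
    rw [← Complex.exp_add]; congr 1; ring
  field_simp
  linear_combination (-(Sfun Δ a b)) * key

lemma pair_reindex {n : ℕ} (τ : Equiv.Perm (Fin n)) (F : Fin n → Fin n → ℂ)
    (P : Fin n → Fin n → Prop) [∀ a b, Decidable (P a b)] :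
    ∏ kl ∈ Finset.univ.filter (fun kl : Fin n × Fin n => P kl.1 kl.2),
        F (τ⁻¹ kl.1) (τ⁻¹ kl.2) =
      ∏ kl ∈ Finset.univ.filter (fun kl : Fin n × Fin n => P (τ kl.1) (τ kl.2)),
        F kl.1 kl.2 := by
  refine Finset.prod_nbij' (fun kl => (τ⁻¹ kl.1, τ⁻¹ kl.2)) (fun kl => (τ kl.1, τ kl.2))
    ?_ ?_ ?_ ?_ ?_ <;> simp [Finset.mem_filter]

lemma prod_fst_eq {n : ℕ} (a0 : Fin n) (F : Fin n → Fin n → ℂ) (Q : Fin n → Prop)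
    [DecidablePred Q] :
    ∏ kl ∈ Finset.univ.filter (fun kl : Fin n × Fin n => kl.1 = a0 ∧ Q kl.2), F kl.1 kl.2 =
      ∏ b ∈ Finset.univ.filter Q, F a0 b := by
  refine Finset.prod_nbij' (fun kl => kl.2) (fun b => (a0, b)) ?_ ?_ ?_ ?_ ?_
  · intro kl hkl; simp only [Finset.mem_filter, Finset.mem_univ, true_and] at hkl ⊢
    exact hkl.2
  · intro b hb; simp_all
  · intro kl hkl; simp only [Finset.mem_filter, Finset.mem_univ, true_and] at hkl
    exact Prod.ext hkl.1.symm rfl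
  · intro b _; rfl
  · intro kl hkl; simp only [Finset.mem_filter, Finset.mem_univ, true_and] at hkl
    rw [hkl.1]

lemma prod_snd_eq {n : ℕ} (a0 : Fin n) (F : Fin n → Fin n → ℂ) (Q : Fin n → Prop)
    [DecidablePred Q] :
    ∏ kl ∈ Finset.univ.filter (fun kl : Fin n × Fin n => Q kl.1 ∧ kl.2 = a0), F kl.1 kl.2 =
      ∏ b ∈ Finset.univ.filter Q, F b a0 := by
  refine Finset.prod_nbij' (fun kl => kl.1) (fun b => (b, a0)) ?_ ?_ ?_ ?_ ?_
  · intro kl hkl; simp only [Finset.mem_filter, Finset.mem_univ, true_and] at hkl ⊢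
    exact hkl.1
  · intro b hb; simp_all
  · intro kl hkl; simp only [Finset.mem_filter, Finset.mem_univ, true_and] at hkl
    exact Prod.ext rfl hkl.2.symm
  · intro b _; rfl
  · intro kl hkl; simp only [Finset.mem_filter, Finset.mem_univ, true_and] at hkl
    rw [hkl.2]

lemma finRotate_lt_iff {m : ℕ} (a b : Fin (m + 1)) :
    finRotate (m + 1) a < finRotate (m + 1) b ↔
      b ≠ Fin.last m ∧ (a = Fin.last m ∨ a < b) := by
  rw [finRotate_succ_apply, finRotate_succ_apply, Fin.lt_def, Fin.lt_def,
    Fin.val_add_one, Fin.val_add_one]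
  have hab : a.1 ≤ m := Nat.lt_succ_iff.mp a.isLt
  have hbb : b.1 ≤ m := Nat.lt_succ_iff.mp b.isLt
  have hea : a = Fin.last m ↔ a.1 = m := by
    rw [Fin.ext_iff]; simp [Fin.last]
  have heb : b = Fin.last m ↔ b.1 = m := by
    rw [Fin.ext_iff]; simp [Fin.last]
  rcases eq_or_ne a (Fin.last m) with ha | ha <;> rcases eq_or_ne b (Fin.last m) with hb | hb <;>
    simp [ha, hb] <;> omega

/-- The key single-term identity: multiplying `ρ` by the inverse rotation multiplies `A_ρ`
by `z_{ρ(last)}^N`, as a consequence of the Bethe equations. -/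
lemma Acoef_mul_rotate_inv {m : ℕ} (N : ℕ)
    (hΘ : ∀ a ∈ Ddom Δ, ∀ b ∈ Ddom Δ,
      Complex.exp (-(Complex.I * (Θ a b : ℂ))) =
        Complex.exp (Complex.I * ((a : ℂ) - (b : ℂ))) * Sfun Δ a b / Sfun Δ b a)
    (p : Fin (m + 1) → ℝ) (hpD : ∀ j, p j ∈ Ddom Δ)
    (hBE : ∀ j, Complex.exp (Complex.I * (N : ℂ) * (p j : ℂ)) =
      (-1 : ℂ) ^ m *
        Complex.exp (-(Complex.I * ((∑ k, Θ (p j) (p k) : ℝ) : ℂ))))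
    (ρ : Equiv.Perm (Fin (m + 1))) :
    Acoef Δ p (ρ * (finRotate (m + 1))⁻¹) =
      zOf p (ρ (Fin.last m)) ^ N * Acoef Δ p ρ := by
  classical
  set lst : Fin (m + 1) := Fin.last m with hlst
  set G : Fin (m + 1) → Fin (m + 1) → ℂ :=
    fun i j => Complex.exp (Complex.I * (p i : ℂ)) * Sfun Δ (p i) (p j) with hG
  have hAc : ∀ σ : Equiv.Perm (Fin (m + 1)), Acoef Δ p σ =
      ((Equiv.Perm.sign σ : ℤ) : ℂ) *
        ∏ kl ∈ Finset.univ.filter (fun kl : Fin (m + 1) × Fin (m + 1) => kl.1 < kl.2),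
          G (σ kl.1) (σ kl.2) := fun σ => rfl
  -- Step A: reindex the pair product by the rotation
  have hA : ∏ kl ∈ Finset.univ.filter (fun kl : Fin (m + 1) × Fin (m + 1) => kl.1 < kl.2),
      G ((ρ * (finRotate (m + 1))⁻¹) kl.1) ((ρ * (finRotate (m + 1))⁻¹) kl.2)
      = ∏ kl ∈ Finset.univ.filter (fun kl : Fin (m + 1) × Fin (m + 1) =>
          finRotate (m + 1) kl.1 < finRotate (m + 1) kl.2),
          G (ρ kl.1) (ρ kl.2) := by
    simp only [Equiv.Perm.mul_apply]
    exact pair_reindex (finRotate (m + 1)) (fun i j => G (ρ i) (ρ j)) (· < ·)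
  have hfilter : Finset.univ.filter (fun kl : Fin (m + 1) × Fin (m + 1) =>
        finRotate (m + 1) kl.1 < finRotate (m + 1) kl.2)
      = Finset.univ.filter (fun kl : Fin (m + 1) × Fin (m + 1) =>
          kl.2 ≠ lst ∧ (kl.1 = lst ∨ kl.1 < kl.2)) := by
    ext kl
    simp only [Finset.mem_filter, Finset.mem_univ, true_and]
    exact finRotate_lt_iff kl.1 kl.2
  -- Step B: split the rotated pair product
  have hsplit2 : ∏ kl ∈ Finset.univ.filter (fun kl : Fin (m + 1) × Fin (m + 1) =>
          kl.2 ≠ lst ∧ (kl.1 = lst ∨ kl.1 < kl.2)), G (ρ kl.1) (ρ kl.2)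
      = (∏ b ∈ Finset.univ.filter (fun b => b ≠ lst), G (ρ lst) (ρ b)) *
        ∏ kl ∈ Finset.univ.filter (fun kl : Fin (m + 1) × Fin (m + 1) =>
          kl.1 < kl.2 ∧ kl.2 ≠ lst), G (ρ kl.1) (ρ kl.2) := by
    rw [← Finset.prod_filter_mul_prod_filter_not
      (Finset.univ.filter (fun kl : Fin (m + 1) × Fin (m + 1) =>
        kl.2 ≠ lst ∧ (kl.1 = lst ∨ kl.1 < kl.2))) (fun kl => kl.1 = lst)]
    rw [Finset.filter_filter, Finset.filter_filter]
    congr 1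
    · rw [show (Finset.univ.filter fun kl : Fin (m + 1) × Fin (m + 1) =>
          (kl.2 ≠ lst ∧ (kl.1 = lst ∨ kl.1 < kl.2)) ∧ kl.1 = lst)
          = Finset.univ.filter (fun kl : Fin (m + 1) × Fin (m + 1) =>
              kl.1 = lst ∧ kl.2 ≠ lst) from ?_]
      · exact prod_fst_eq lst (fun i j => G (ρ i) (ρ j)) (fun b => b ≠ lst)
      · ext kl; simp only [Finset.mem_filter, Finset.mem_univ, true_and]; tauto
    · apply Finset.prod_congr _ (fun _ _ => rfl)
      ext kl; simp only [Finset.mem_filter, Finset.mem_univ, true_and]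
      constructor
      · rintro ⟨⟨h2, h1⟩, hne⟩
        rcases h1 with h1 | h1
        · exact absurd h1 hne
        · exact ⟨h1, h2⟩
      · rintro ⟨hlt, h2⟩
        refine ⟨⟨h2, Or.inr hlt⟩, ?_⟩
        intro he
        rw [he] at hlt
        exact (not_lt.mpr (Fin.le_last kl.2)) hlt
  -- Step B': split the original pair product
  have hsplit1 : ∏ kl ∈ Finset.univ.filter (fun kl : Fin (m + 1) × Fin (m + 1) => kl.1 < kl.2),
        G (ρ kl.1) (ρ kl.2)
      = (∏ b ∈ Finset.univ.filter (fun b => b ≠ lst), G (ρ b) (ρ lst)) *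
        ∏ kl ∈ Finset.univ.filter (fun kl : Fin (m + 1) × Fin (m + 1) =>
          kl.1 < kl.2 ∧ kl.2 ≠ lst), G (ρ kl.1) (ρ kl.2) := by
    rw [← Finset.prod_filter_mul_prod_filter_not
      (Finset.univ.filter (fun kl : Fin (m + 1) × Fin (m + 1) => kl.1 < kl.2))
      (fun kl => kl.2 = lst)]
    rw [Finset.filter_filter, Finset.filter_filter]
    congr 1
    · rw [show (Finset.univ.filter fun kl : Fin (m + 1) × Fin (m + 1) =>
          kl.1 < kl.2 ∧ kl.2 = lst)
          = Finset.univ.filter (fun kl : Fin (m + 1) × Fin (m + 1) =>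
              kl.1 ≠ lst ∧ kl.2 = lst) from ?_]
      · exact prod_snd_eq lst (fun i j => G (ρ i) (ρ j)) (fun b => b ≠ lst)
      · ext kl; simp only [Finset.mem_filter, Finset.mem_univ, true_and]
        constructor
        · rintro ⟨hlt, h2⟩
          rw [h2] at hlt
          exact ⟨Fin.lt_last_iff_ne_last.mp hlt, h2⟩
        · rintro ⟨hne, h2⟩
          rw [h2]
          exact ⟨Fin.lt_last_iff_ne_last.mpr hne, rfl⟩
  -- exchange relation
  have hexch : ∏ b ∈ Finset.univ.filter (fun b => b ≠ lst), G (ρ lst) (ρ b)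
      = (∏ b ∈ Finset.univ.filter (fun b => b ≠ lst),
          Complex.exp (-(Complex.I * (Θ (p (ρ lst)) (p (ρ b)) : ℂ)))) *
        ∏ b ∈ Finset.univ.filter (fun b => b ≠ lst), G (ρ b) (ρ lst) := by
    rw [← Finset.prod_mul_distrib]
    exact Finset.prod_congr rfl fun b _ => exchange hΘ (hpD _) (hpD _)
  -- the Bethe equation step
  have hfull : ∏ b ∈ Finset.univ.filter (fun b => b ≠ lst),
      Complex.exp (-(Complex.I * (Θ (p (ρ lst)) (p (ρ b)) : ℂ)))
      = (-1 : ℂ) ^ m * Complex.exp (Complex.I * (N : ℂ) * (p (ρ lst) : ℂ)) := by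
    have h1 : ∏ b : Fin (m + 1), Complex.exp (-(Complex.I * (Θ (p (ρ lst)) (p (ρ b)) : ℂ)))
        = Complex.exp (-(Complex.I * ((∑ k, Θ (p (ρ lst)) (p k) : ℝ) : ℂ))) := by
      rw [Equiv.prod_comp ρ (fun j => Complex.exp (-(Complex.I * (Θ (p (ρ lst)) (p j) : ℂ)))),
        ← Complex.exp_sum]
      congr 1
      push_cast
      rw [Finset.mul_sum, ← Finset.sum_neg_distrib]
    have h3 := Finset.mul_prod_erase Finset.univ
      (fun b => Complex.exp (-(Complex.I * (Θ (p (ρ lst)) (p (ρ b)) : ℂ)))) (Finset.mem_univ lst)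
    beta_reduce at h3
    rw [exp_theta_diag hΘ (hpD (ρ lst)), one_mul] at h3
    rw [Finset.filter_ne', h3, h1, hBE (ρ lst), ← mul_assoc, ← pow_add,
      Even.neg_one_pow ⟨m, rfl⟩, one_mul]
  -- the sign
  have hsign : ((Equiv.Perm.sign (ρ * (finRotate (m + 1))⁻¹) : ℤ) : ℂ)
      = (-1 : ℂ) ^ m * ((Equiv.Perm.sign ρ : ℤ) : ℂ) := by
    rw [map_mul, map_inv, sign_finRotate, Int.units_inv_eq_self]
    simp only [Units.val_mul, Units.val_pow_eq_pow_val, Units.val_neg, Units.val_one]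
    push_cast
    ring
  have hzpow : zOf p (ρ lst) ^ N = Complex.exp (Complex.I * (N : ℂ) * (p (ρ lst) : ℂ)) := by
    show Complex.exp (Complex.I * (p (ρ lst) : ℂ)) ^ N = _
    rw [← Complex.exp_nat_mul]; congr 1; ring
  rw [hAc, hAc, hA, hfilter, hsplit2, hsplit1, hexch, hfull, hsign, hzpow]
  rcases Nat.even_or_odd m with hm | hm
  · rw [hm.neg_one_pow]; ring
  · rw [hm.neg_one_pow]; ring

end Helpers

/-- **Change of variables formula (Proposition 3.3).** -/
theorem change_of_variables
    (N n : ℕ) (hN : 0 < N)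
    (c : ℝ) (hc : 0 < c) (Δ : ℝ) (hΔ : Δ = (2 - c ^ 2) / 2)
    (Θ : ℝ → ℝ → ℝ)
    (hΘcont : ContinuousOn (fun q : ℝ × ℝ => Θ q.1 q.2) (Ddom Δ ×ˢ Ddom Δ))
    (hΘzero : Θ 0 0 = 0)
    (hΘ : ∀ a ∈ Ddom Δ, ∀ b ∈ Ddom Δ,
      Complex.exp (-(Complex.I * (Θ a b : ℂ))) =
        Complex.exp (Complex.I * ((a : ℂ) - (b : ℂ))) * Sfun Δ a b / Sfun Δ b a)
    (p : Fin n → ℝ) (hpD : ∀ j, p j ∈ Ddom Δ)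
    (hBE : ∀ j, Complex.exp (Complex.I * (N : ℂ) * (p j : ℂ)) =
      (-1 : ℂ) ^ (n - 1) *
        Complex.exp (-(Complex.I * ((∑ k, Θ (p j) (p k) : ℝ) : ℂ))))
    (x : ℕ → ℤ) (hx0 : x 0 = x n - N)
    (hxmono : ∀ i j, i < j → j ≤ n → x i < x j)
    (hx1 : 1 ≤ x 1) (hxN : x n ≤ (N : ℤ))
    (f : Equiv.Perm (Fin n) → ℝ) :
    ∑ σ : Equiv.Perm (Fin n),
        Acoef Δ p σ * (f σ : ℂ) * ∏ k : Fin n, zOf p (σ k) ^ (x ((k : ℕ) + 1)) =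
      ∑ σ : Equiv.Perm (Fin n),
        Acoef Δ p σ * (f (σ * finRotate n) : ℂ) *
          ∏ k : Fin n, zOf p (σ k) ^ (x (k : ℕ)) := by
  classical
  obtain _ | m := n
  · have h0 : finRotate 0 = 1 := by ext i; exact i.elim0
    simp [h0]
  · have hBE' : ∀ j, Complex.exp (Complex.I * (N : ℂ) * (p j : ℂ)) =
        (-1 : ℂ) ^ m *
          Complex.exp (-(Complex.I * ((∑ k, Θ (p j) (p k) : ℝ) : ℂ))) := by
      simpa using hBE
    have key := fun ρ => Acoef_mul_rotate_inv N hΘ p hpD hBE' ρ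
    rw [show (∑ σ : Equiv.Perm (Fin (m + 1)), Acoef Δ p σ * (f (σ * finRotate (m + 1)) : ℂ) *
        ∏ k : Fin (m + 1), zOf p (σ k) ^ (x (k : ℕ)))
      = ∑ σ : Equiv.Perm (Fin (m + 1)), Acoef Δ p (σ * (finRotate (m + 1))⁻¹) *
          (f (σ * (finRotate (m + 1))⁻¹ * finRotate (m + 1)) : ℂ) *
          ∏ k : Fin (m + 1), zOf p ((σ * (finRotate (m + 1))⁻¹) k) ^ (x (k : ℕ))
      from (Equiv.sum_comp (Equiv.mulRight (finRotate (m + 1))⁻¹) _).symm]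
    apply Finset.sum_congr rfl
    intro ρ _
    rw [inv_mul_cancel_right, key ρ]
    have hprod : ∏ k : Fin (m + 1), zOf p ((ρ * (finRotate (m + 1))⁻¹) k) ^ (x (k : ℕ))
        = ∏ k : Fin (m + 1), zOf p (ρ k) ^ (x ((finRotate (m + 1) k : Fin (m + 1)) : ℕ)) := by
      rw [← Equiv.prod_comp (finRotate (m + 1))
        (fun k => zOf p ((ρ * (finRotate (m + 1))⁻¹) k) ^ (x (k : ℕ)))]
      apply Finset.prod_congr rfl; intro k _
      have hk : (ρ * (finRotate (m + 1))⁻¹) ((finRotate (m + 1)) k) = ρ k := by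
        rw [Equiv.Perm.mul_apply, Equiv.Perm.inv_def, Equiv.symm_apply_apply]
      rw [hk]
    rw [hprod, Fintype.prod_eq_mul_prod_compl (Fin.last m),
      Fintype.prod_eq_mul_prod_compl (Fin.last m)]
    have hrest : ∏ k ∈ ({Fin.last m}ᶜ : Finset (Fin (m + 1))),
        zOf p (ρ k) ^ (x ((finRotate (m + 1) k : Fin (m + 1)) : ℕ))
        = ∏ k ∈ ({Fin.last m}ᶜ : Finset (Fin (m + 1))), zOf p (ρ k) ^ (x ((k : ℕ) + 1)) := by
      apply Finset.prod_congr rfl; intro k hk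
      have hk' : k ≠ Fin.last m := by simpa using hk
      congr 2
      rw [finRotate_succ_apply, Fin.val_add_one]
      simp [hk']
    rw [hrest]
    have hlastval : ((finRotate (m + 1) (Fin.last m) : Fin (m + 1)) : ℕ) = 0 := by
      rw [finRotate_succ_apply, Fin.val_add_one]; simp
    rw [hlastval, hx0]
    have hzne : zOf p (ρ (Fin.last m)) ≠ 0 := Complex.exp_ne_zero _
    have hzz : zOf p (ρ (Fin.last m)) ^ (x ((Fin.last m : ℕ) + 1))
        = zOf p (ρ (Fin.last m)) ^ (N : ℤ) * zOf p (ρ (Fin.last m)) ^ (x (m + 1) - N) := by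
      rw [← zpow_add₀ hzne]
      congr 1
      rw [Fin.val_last]; ring
    rw [hzz, ← zpow_natCast (zOf p (ρ (Fin.last m))) N]
    ring
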